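/- Let Q be the Pareto distribution with scale 1 and shape α = 3/2, i.e. with density f(λ) = (3/2)·λ^{−5/2} on [1,∞). Then: (i) Q has infinite second moment, ∫₁^∞ λ²·f(λ) dλ = ∞ (so Q has infinite variance); and (ii) with λ̄ = ∫ λ dQ = 3, the entropy-based epistemic uncertainty for an exponential predictive distribution equals ∫ KL(Exp(λ) ‖ Exp(3)) dQ(λ) = 22/15 − log 3, where KL(Exp(λ) ‖ Exp(λ')) = log λ − log λ' + λ'/λ − 1. -/

import Mathlib

open MeasureTheory Real Set Filter

lemma aux_rpow_deriv {p : ℝ} {x : ℝ} (hx : 0 < x) :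
    HasDerivAt (fun y : ℝ => y ^ p) (p * x ^ (p - 1)) x :=
  Real.hasDerivAt_rpow_const (Or.inl hx.ne')

lemma aux_F_deriv {x : ℝ} (hx : 1 ≤ x) :
    HasDerivAt (fun y : ℝ => (Real.log 3 + 1 / 3 - Real.log y) * y ^ (-(3/2) : ℝ)
        - (9/5) * y ^ (-(5/2) : ℝ))
      ((Real.log x - Real.log 3 + 3 / x - 1) * ((3 / 2 : ℝ) * x ^ (-(5 / 2) : ℝ))) x := by
  have hx0 : 0 < x := lt_of_lt_of_le one_pos hx
  have h1 : HasDerivAt (fun y : ℝ => Real.log 3 + 1 / 3 - Real.log y) (-(1/x)) x := by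
    simpa using ((Real.hasDerivAt_log hx0.ne').const_sub (Real.log 3 + 1 / 3))
  have h2 := aux_rpow_deriv (p := (-(3/2) : ℝ)) hx0
  have h3 := aux_rpow_deriv (p := (-(5/2) : ℝ)) hx0
  have h := (h1.mul h2).sub (h3.const_mul (9/5 : ℝ))
  convert h using 1
  case e'_4 => rfl
  case e'_5 => rfl
  case e'_8 => rfl
  have e1 : x ^ (-(3/2) : ℝ) - 1 = x ^ (-(3/2) : ℝ) - 1 := rfl
  have k2 : x ^ (-(7/2) : ℝ) * x = x ^ (-(5/2) : ℝ) := by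
    rw [← Real.rpow_add_one hx0.ne']; norm_num
  have k1 : x ^ (-(5/2) : ℝ) * x = x ^ (-(3/2) : ℝ) := by
    rw [← Real.rpow_add_one hx0.ne']; norm_num
  rw [show ((-(3/2) : ℝ) - 1) = (-(5/2) : ℝ) by norm_num,
    show ((-(5/2) : ℝ) - 1) = (-(7/2) : ℝ) by norm_num, ← k1, ← k2]
  field_simp
  ring

theorem pareto_infinite_variance_entropy_EU :
    (∫⁻ x in Set.Ioi (1 : ℝ),
        ENNReal.ofReal (x ^ 2 * ((3 / 2 : ℝ) * x ^ (-(5 / 2) : ℝ))) = ⊤) ∧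
    (∫ x in Set.Ioi (1 : ℝ), x * ((3 / 2 : ℝ) * x ^ (-(5 / 2) : ℝ)) = 3) ∧
    (∫ x in Set.Ioi (1 : ℝ),
        (Real.log x - Real.log 3 + 3 / x - 1) * ((3 / 2 : ℝ) * x ^ (-(5 / 2) : ℝ))
      = 22 / 15 - Real.log 3) := by
  refine ⟨?_, ?_, ?_⟩
  · -- infinite second moment
    by_contra h
    have hne := lt_top_iff_ne_top.2 h
    have hmeas : AEStronglyMeasurable
        (fun x : ℝ => x ^ 2 * ((3 / 2 : ℝ) * x ^ (-(5 / 2) : ℝ)))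
        (volume.restrict (Set.Ioi (1 : ℝ))) := by
      have hc : ContinuousOn (fun x : ℝ => x ^ 2 * ((3 / 2 : ℝ) * x ^ (-(5 / 2) : ℝ)))
          (Set.Ioi (1:ℝ)) :=
        (continuousOn_id.pow 2).mul (continuousOn_const.mul
          (continuousOn_id.rpow_const fun x hx => Or.inl (ne_of_gt (lt_trans one_pos hx))))
      exact hc.aestronglyMeasurable measurableSet_Ioi
    have hnn : 0 ≤ᵐ[volume.restrict (Set.Ioi (1 : ℝ))]
        fun x : ℝ => x ^ 2 * ((3 / 2 : ℝ) * x ^ (-(5 / 2) : ℝ)) := by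
      filter_upwards [ae_restrict_mem measurableSet_Ioi] with x hx
      have hx0 : (0:ℝ) < x := lt_trans one_pos hx
      positivity
    have hint : IntegrableOn
        (fun x : ℝ => x ^ 2 * ((3 / 2 : ℝ) * x ^ (-(5 / 2) : ℝ))) (Set.Ioi (1:ℝ)) :=
      ⟨hmeas, (hasFiniteIntegral_iff_ofReal hnn).2 hne⟩
    have heq : ∀ x ∈ Set.Ioi (1:ℝ),
        x ^ 2 * ((3 / 2 : ℝ) * x ^ (-(5 / 2) : ℝ)) = (3/2 : ℝ) * x ^ (-(1/2) : ℝ) := by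
      intro x hx
      have hx0 : (0:ℝ) < x := lt_trans one_pos hx
      have : (x:ℝ) ^ 2 * x ^ (-(5/2) : ℝ) = x ^ (-(1/2) : ℝ) := by
        rw [← Real.rpow_natCast x 2, ← Real.rpow_add hx0]; norm_num
      calc x ^ 2 * ((3 / 2 : ℝ) * x ^ (-(5 / 2) : ℝ))
          = (3/2 : ℝ) * (x ^ 2 * x ^ (-(5/2) : ℝ)) := by ring
        _ = (3/2 : ℝ) * x ^ (-(1/2) : ℝ) := by rw [this]
    have hint2 : IntegrableOn (fun x : ℝ => (3/2 : ℝ) * x ^ (-(1/2) : ℝ)) (Set.Ioi (1:ℝ)) :=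
      hint.congr_fun heq measurableSet_Ioi
    have hint3 : IntegrableOn (fun x : ℝ => x ^ (-(1/2) : ℝ)) (Set.Ioi (1:ℝ)) := by
      have h4 : IntegrableOn (fun x : ℝ => (2/3 : ℝ) * ((3/2 : ℝ) * x ^ (-(1/2) : ℝ)))
          (Set.Ioi (1:ℝ)) := hint2.const_mul (2/3 : ℝ)
      refine h4.congr_fun (fun x _ => ?_) measurableSet_Ioi
      ring
    rw [integrableOn_Ioi_rpow_iff one_pos] at hint3
    norm_num at hint3
  · -- mean = 3
    have heq : ∀ x ∈ Set.Ioi (1:ℝ),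
        x * ((3 / 2 : ℝ) * x ^ (-(5 / 2) : ℝ)) = (3/2 : ℝ) * x ^ (-(3/2) : ℝ) := by
      intro x hx
      have hx0 : (0:ℝ) < x := lt_trans one_pos hx
      have : x ^ (-(5/2) : ℝ) * x = x ^ (-(3/2) : ℝ) := by
        rw [← Real.rpow_add_one hx0.ne']; norm_num
      rw [← this]; ring
    rw [setIntegral_congr_fun measurableSet_Ioi heq, MeasureTheory.integral_const_mul,
      integral_Ioi_rpow_of_lt (by norm_num) one_pos]
    norm_num
  · -- epistemic uncertainty
    have key := integral_Ioi_of_hasDerivAt_of_nonneg'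
      (g := fun y : ℝ => (Real.log 3 + 1 / 3 - Real.log y) * y ^ (-(3/2) : ℝ)
        - (9/5) * y ^ (-(5/2) : ℝ))
      (g' := fun x : ℝ => (Real.log x - Real.log 3 + 3 / x - 1)
        * ((3 / 2 : ℝ) * x ^ (-(5 / 2) : ℝ)))
      (a := 1) (l := 0)
      (fun x hx => aux_F_deriv hx)
      ?_ ?_
    · rw [key]
      norm_num [Real.one_rpow]
      ring
    · -- nonnegativity
      intro x hx
      have hx1 : (1:ℝ) < x := hx
      have hx0 : (0:ℝ) < x := lt_trans one_pos hx1
      have h1 : Real.log (3 / x) ≤ 3 / x - 1 :=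
        Real.log_le_sub_one_of_pos (by positivity)
      rw [Real.log_div (by norm_num) hx0.ne'] at h1
      have h2 : (0:ℝ) ≤ Real.log x - Real.log 3 + 3 / x - 1 := by linarith
      have h3 : (0:ℝ) ≤ (3 / 2 : ℝ) * x ^ (-(5 / 2) : ℝ) := by positivity
      exact mul_nonneg h2 h3
    · -- tendsto 0
      have t1 : Tendsto (fun x : ℝ => (Real.log 3 + 1 / 3) * x ^ (-(3/2) : ℝ))
          atTop (nhds 0) := by
        simpa using (tendsto_rpow_neg_atTop (by norm_num : (0:ℝ) < 3/2)).const_mul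
          (Real.log 3 + 1 / 3)
      have t2 : Tendsto (fun x : ℝ => Real.log x * x ^ (-(3/2) : ℝ)) atTop (nhds 0) := by
        have := (isLittleO_log_rpow_atTop (by norm_num : (0:ℝ) < 3/2)).tendsto_div_nhds_zero
        refine this.congr' ?_
        filter_upwards [eventually_gt_atTop (0:ℝ)] with x hx
        rw [div_eq_mul_inv, ← Real.rpow_neg hx.le]
      have t3 : Tendsto (fun x : ℝ => (9/5 : ℝ) * x ^ (-(5/2) : ℝ)) atTop (nhds 0) := by
        simpa using (tendsto_rpow_neg_atTop (by norm_num : (0:ℝ) < 5/2)).const_mul (9/5 : ℝ)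
      have := (t1.sub t2).sub t3
      simp only [sub_zero, zero_sub, neg_zero] at this
      refine this.congr (fun x => ?_)
      ring
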